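/- Let X ~ Binom(m, a·log n/n) where m = ρn + o(n) for some ρ > 0 and a > 0, and let kₙ ∈ [m] with kₙ = τρ·log n + o(log n) for some 0 ≤ τ ≤ a. Then P(X ≤ kₙ) = n^{-ρ(a - τ·log(ea/τ)) + o(1)} as n → ∞. -/

import Mathlib

open Filter Topology

/-- Binomial lower-tail probability `P(X ≤ k)` for `X ~ Binom(m, p)`. -/
noncomputable def binomCdf (p : ℝ) (m k : ℕ) : ℝ :=
  ∑ j ∈ Finset.range (k + 1), (m.choose j : ℝ) * p ^ j * (1 - p) ^ (m - j)



lemma ratio_le_exp (k : ℕ) (hk : 1 ≤ k) :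
    (((k:ℝ)+1)/k)^k ≤ Real.exp 1 := by
  have hkpos : (0:ℝ) < k := by exact_mod_cast hk
  have h1 : ((k:ℝ)+1)/k ≤ Real.exp (1/(k:ℝ)) := by
    have h := Real.add_one_le_exp (1/(k:ℝ))
    have : ((k:ℝ)+1)/k = 1/(k:ℝ) + 1 := by field_simp; ring
    rw [this]; linarith [h]
  calc (((k:ℝ)+1)/k)^k ≤ (Real.exp (1/(k:ℝ)))^k := by
        apply pow_le_pow_left₀ (by positivity) h1
    _ = Real.exp 1 := by
        rw [← Real.exp_nat_mul]; congr 1; field_simp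

lemma le_factorial_real (k : ℕ) : ((k:ℝ) / Real.exp 1)^k ≤ k.factorial := by
  induction k with
  | zero => simp
  | succ k ih =>
    rcases Nat.eq_zero_or_pos k with hk | hk
    · subst hk
      norm_num [Nat.factorial]
      rw [inv_le_one_iff₀]
      right; exact Real.one_le_exp (by norm_num)
    · have hkpos : (0:ℝ) < k := by exact_mod_cast hk
      have key : (((k:ℝ)+1)/Real.exp 1)^(k+1) ≤ ((k:ℝ)+1) * ((k:ℝ)/Real.exp 1)^k := by
        have h := ratio_le_exp k hk
        have e1 : (((k:ℝ)+1)/Real.exp 1)^(k+1)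
            = ((k:ℝ)+1) * ((k:ℝ)/Real.exp 1)^k * ((((k:ℝ)+1)/k)^k / Real.exp 1) := by
          rw [pow_succ]
          rw [div_pow, div_pow, div_pow]
          field_simp
        rw [e1]
        nth_rewrite 2 [show ((k:ℝ)+1) * ((k:ℝ)/Real.exp 1)^k
          = ((k:ℝ)+1) * ((k:ℝ)/Real.exp 1)^k * 1 by ring]
        apply mul_le_mul_of_nonneg_left _ (by positivity)
        rw [div_le_one (Real.exp_pos 1)]
        exact h
      calc (((k+1:ℕ):ℝ)/Real.exp 1)^(k+1) = (((k:ℝ)+1)/Real.exp 1)^(k+1) := by push_cast; ring_nf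
        _ ≤ ((k:ℝ)+1) * ((k:ℝ)/Real.exp 1)^k := key
        _ ≤ ((k:ℝ)+1) * k.factorial := by
            apply mul_le_mul_of_nonneg_left ih (by positivity)
        _ = ((k+1).factorial : ℝ) := by
            rw [Nat.factorial_succ]; push_cast; ring

lemma exp_le_ratio (k : ℕ) (hk : 1 ≤ k) :
    Real.exp 1 ≤ (((k:ℝ)+1)/k)^(k+1) := by
  have hkpos : (0:ℝ) < k := by exact_mod_cast hk
  have h1 : Real.exp (1/((k:ℝ)+1)) ≤ ((k:ℝ)+1)/k := by
    have h := Real.add_one_le_exp (-(1/((k:ℝ)+1)))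
    have hpos : (0:ℝ) < (k:ℝ)+1 := by positivity
    have h2 : (k:ℝ)/((k:ℝ)+1) ≤ Real.exp (-(1/((k:ℝ)+1))) := by
      have e : -(1/((k:ℝ)+1)) + 1 = (k:ℝ)/((k:ℝ)+1) := by field_simp; ring
      linarith [e ▸ h]
    rw [Real.exp_neg] at h2
    have hkpos' : (0:ℝ) < (k:ℝ)/((k:ℝ)+1) := by positivity
    calc Real.exp (1/((k:ℝ)+1)) ≤ ((k:ℝ)/((k:ℝ)+1))⁻¹ := by
          rw [le_inv_comm₀ (Real.exp_pos _) hkpos']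
          rwa [← Real.exp_neg] at h2 ⊢
      _ = ((k:ℝ)+1)/k := by field_simp
  calc Real.exp 1 = (Real.exp (1/((k:ℝ)+1)))^(k+1) := by
        rw [← Real.exp_nat_mul]; congr 1; push_cast; field_simp
    _ ≤ (((k:ℝ)+1)/k)^(k+1) := by
        apply pow_le_pow_left₀ (Real.exp_pos _).le h1

lemma factorial_le_real (k : ℕ) (hk : 1 ≤ k) :
    (k.factorial : ℝ) ≤ Real.exp 1 * k * ((k:ℝ) / Real.exp 1)^k := by
  induction k with
  | zero => omega
  | succ k ih =>
    rcases Nat.eq_zero_or_pos k with hk0 | hk0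
    · subst hk0
      norm_num [Nat.factorial]
    · have hkpos : (0:ℝ) < k := by exact_mod_cast hk0
      have hepos := Real.exp_pos 1
      have key : (k:ℝ) * ((k:ℝ)/Real.exp 1)^k ≤ (((k:ℝ)+1)/Real.exp 1)^(k+1) := by
        have h := exp_le_ratio k hk0
        have gen : ∀ E : ℝ, 0 < E → (((k:ℝ)+1)/E)^(k+1)
            = (k:ℝ) * ((k:ℝ)/E)^k * ((((k:ℝ)+1)/k)^(k+1) / E) := by
          intro E hE
          rw [div_pow, div_pow, div_pow, pow_succ]
          field_simp
          ring
        have e1 := gen _ hepos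
        rw [e1]
        nth_rewrite 1 [show (k:ℝ) * ((k:ℝ)/Real.exp 1)^k
          = (k:ℝ) * ((k:ℝ)/Real.exp 1)^k * 1 by ring]
        apply mul_le_mul_of_nonneg_left _ (by positivity)
        rw [le_div_iff₀ hepos, one_mul]
        exact h
      have ihk := ih hk0
      calc ((k+1).factorial : ℝ) = ((k:ℝ)+1) * k.factorial := by
            rw [Nat.factorial_succ]; push_cast; ring
        _ ≤ ((k:ℝ)+1) * (Real.exp 1 * k * ((k:ℝ)/Real.exp 1)^k) := by
            apply mul_le_mul_of_nonneg_left ihk (by positivity)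
        _ = Real.exp 1 * ((k:ℝ)+1) * ((k:ℝ) * ((k:ℝ)/Real.exp 1)^k) := by ring
        _ ≤ Real.exp 1 * ((k:ℝ)+1) * (((k:ℝ)+1)/Real.exp 1)^(k+1) := by
            apply mul_le_mul_of_nonneg_left key (by positivity)
        _ = Real.exp 1 * ((k+1:ℕ):ℝ) * (((k+1:ℕ):ℝ)/Real.exp 1)^(k+1) := by push_cast; ring


lemma factorial_le_factorial_mul_pow {j K : ℕ} (h : j ≤ K) :
    K.factorial ≤ j.factorial * K ^ (K - j) := by
  induction K with
  | zero => interval_cases j; simp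
  | succ K ih =>
    rcases Nat.eq_or_lt_of_le h with he | hlt
    · subst he; simp
    · have hj : j ≤ K := Nat.lt_succ_iff.mp hlt
      calc (K+1).factorial = (K+1) * K.factorial := Nat.factorial_succ K
        _ ≤ (K+1) * (j.factorial * K ^ (K - j)) := Nat.mul_le_mul_left _ (ih hj)
        _ ≤ (K+1) * (j.factorial * (K+1) ^ (K - j)) := by
            apply Nat.mul_le_mul_left
            exact Nat.mul_le_mul_left _ (Nat.pow_le_pow_left (Nat.le_succ K) _)
        _ = j.factorial * (K+1)^(K + 1 - j) := by
            rw [show K+1-j = K-j+1 by omega]; ring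

lemma choose_lower {M K : ℕ} (h : K ≤ M) :
    ((M - K + 1 : ℕ) : ℝ) ^ K / K.factorial ≤ (M.choose K : ℝ) := by
  rw [div_le_iff₀ (by positivity)]
  have h1 : (M + 1 - K) ^ K ≤ M.descFactorial K := Nat.pow_sub_le_descFactorial M K
  have h2 : M.descFactorial K = K.factorial * M.choose K :=
    Nat.descFactorial_eq_factorial_mul_choose M K
  have h3 : M - K + 1 = M + 1 - K := by omega
  rw [h3]
  exact_mod_cast (h2 ▸ h1).trans_eq (Nat.mul_comm _ _)

lemma arith_limit (a ρ τ : ℝ) (ha : 0 < a) (hρ : 0 < ρ) (hτ0 : 0 ≤ τ) (hτa : τ ≤ a) :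
    τ*ρ*Real.log (ρ*a) + τ*ρ - τ*ρ*Real.log (τ*ρ) - ρ*a
      = -(ρ * (a - τ * Real.log (Real.exp 1 * a / τ))) := by
  rcases eq_or_lt_of_le hτ0 with h0 | h0
  · simp [← h0]
  · have h1 : Real.log (ρ*a) = Real.log ρ + Real.log a := Real.log_mul hρ.ne' ha.ne'
    have h2 : Real.log (τ*ρ) = Real.log τ + Real.log ρ := Real.log_mul h0.ne' hρ.ne'
    have h3 : Real.log (Real.exp 1 * a / τ) = 1 + Real.log a - Real.log τ := by
      rw [Real.log_div (by positivity) h0.ne', Real.log_mul (Real.exp_pos 1).ne' ha.ne',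
        Real.log_exp]
    rw [h1, h2, h3]; ring

lemma arith_limit_max (a ρ τ : ℝ) (ha : 0 < a) (hρ : 0 < ρ) (hτ0 : 0 ≤ τ) (hτa : τ ≤ a) :
    τ*ρ + max 0 (τ*ρ*Real.log (ρ*a) - τ*ρ*Real.log (τ*ρ)) - ρ*a
      = -(ρ * (a - τ * Real.log (Real.exp 1 * a / τ))) := by
  rcases eq_or_lt_of_le hτ0 with h0 | h0
  · simp [← h0]
  · have hmax : τ*ρ*Real.log (ρ*a) - τ*ρ*Real.log (τ*ρ) = τ*ρ*(Real.log a - Real.log τ) := by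
      rw [Real.log_mul hρ.ne' ha.ne', Real.log_mul h0.ne' hρ.ne']; ring
    have hnn : 0 ≤ τ*ρ*(Real.log a - Real.log τ) := by
      apply mul_nonneg (by positivity)
      simp only [sub_nonneg]
      exact Real.log_le_log h0 hτa
    rw [hmax, max_eq_right hnn]
    have h3 : Real.log (Real.exp 1 * a / τ) = 1 + Real.log a - Real.log τ := by
      rw [Real.log_div (by positivity) h0.ne', Real.log_mul (Real.exp_pos 1).ne' ha.ne',
        Real.log_exp]
    rw [h3]; ring

section
variable (a ρ τ : ℝ) (m k : ℕ → ℕ)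

set_option maxHeartbeats 1600000 in
lemma div_le_div_of_nonneg_right' {x y c : ℝ} (h : x ≤ y) (hc : 0 < c) : x / c ≤ y / c := by
  rw [div_le_div_iff₀ hc hc]
  nlinarith

set_option maxHeartbeats 1600000 in
lemma key_tendsto (ha : 0 < a) (hρ : 0 < ρ)
    (hτ0 : 0 ≤ τ) (hτa : τ ≤ a)
    (hm : Filter.Tendsto (fun n => (m n : ℝ) / n) Filter.atTop (𝓝 ρ))
    (hk : Filter.Tendsto (fun n => (k n : ℝ) / Real.log n) Filter.atTop (𝓝 (τ * ρ)))
    (hkm : ∀ n, 1 ≤ k n ∧ k n ≤ m n) :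
    Tendsto (fun n : ℕ => Real.log (binomCdf (a * Real.log n / n) (m n) (k n)) / Real.log n)
      atTop (𝓝 (-(ρ * (a - τ * Real.log (Real.exp 1 * a / τ))))) := by
  -- basic tendsto facts
  have hLtop : Tendsto (fun n : ℕ => Real.log n) atTop atTop :=
    Real.tendsto_log_atTop.comp tendsto_natCast_atTop_atTop
  have hLpos : ∀ᶠ n : ℕ in atTop, 0 < Real.log n := hLtop.eventually_gt_atTop 0
  have hn1 : ∀ᶠ n : ℕ in atTop, (1:ℝ) < (n:ℝ) := by
    filter_upwards [eventually_ge_atTop 2] with n hn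
    exact_mod_cast Nat.lt_of_lt_of_le one_lt_two hn
  have hp0 : Tendsto (fun n : ℕ => a * Real.log n / n) atTop (𝓝 0) := by
    have h1 : Tendsto (fun x : ℝ => Real.log x / x) atTop (𝓝 0) :=
      Real.isLittleO_log_id_atTop.tendsto_div_nhds_zero
    have h2 : Tendsto (fun n : ℕ => Real.log n / n) atTop (𝓝 0) :=
      h1.comp tendsto_natCast_atTop_atTop
    have := h2.const_mul a
    simpa [mul_div_assoc] using this
  have hppos : ∀ᶠ n : ℕ in atTop, 0 < a * Real.log n / n := by
    filter_upwards [hLpos, hn1] with n h1 h2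
    have : (0:ℝ) < n := by linarith
    positivity
  have hphalf : ∀ᶠ n : ℕ in atTop, a * Real.log n / n < 1/2 := by
    have := hp0.eventually (eventually_lt_nhds (show (0:ℝ) < 1/2 by norm_num))
    exact this
  have hLinv : Tendsto (fun n : ℕ => 1 / Real.log n) atTop (𝓝 0) :=
    tendsto_const_nhds.div_atTop hLtop
  have hninv : Tendsto (fun n : ℕ => 1 / (n:ℝ)) atTop (𝓝 0) :=
    tendsto_const_nhds.div_atTop tendsto_natCast_atTop_atTop
  -- M p / L → ρ a
  have hMp : Tendsto (fun n : ℕ => (m n : ℝ) * (a * Real.log n / n) / Real.log n)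
      atTop (𝓝 (ρ * a)) := by
    apply Tendsto.congr' _ (hm.mul_const a)
    filter_upwards [hLpos, hn1] with n h1 h2
    have hn0 : (n:ℝ) ≠ 0 := by linarith
    field_simp
  -- K/n → 0
  have hKn0 : Tendsto (fun n : ℕ => (k n : ℝ) / n) atTop (𝓝 0) := by
    have h1 : Tendsto (fun n : ℕ => ((k n : ℝ) / Real.log n) * (Real.log n / n))
        atTop (𝓝 (τ * ρ * 0)) := by
      apply hk.mul
      exact (Real.isLittleO_log_id_atTop.tendsto_div_nhds_zero).comp tendsto_natCast_atTop_atTop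
    rw [mul_zero] at h1
    apply Tendsto.congr' _ h1
    filter_upwards [hLpos, hn1] with n h2 h3
    have hn0 : (n:ℝ) ≠ 0 := by linarith
    field_simp
  -- K p / L → 0
  have hKp0 : Tendsto (fun n : ℕ => (k n : ℝ) * (a * Real.log n / n) / Real.log n)
      atTop (𝓝 0) := by
    have h1 := hKn0.mul_const a
    rw [zero_mul] at h1
    apply Tendsto.congr' _ h1
    filter_upwards [hLpos, hn1] with n h2 h3
    have hn0 : (n:ℝ) ≠ 0 := by linarith
    field_simp
  -- (M - K + 1) p / L → ρ a
  have hd : Tendsto (fun n : ℕ => ((m n - k n + 1 : ℕ) : ℝ) * (a * Real.log n / n) / Real.log n)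
      atTop (𝓝 (ρ * a)) := by
    have h1 : Tendsto (fun n : ℕ => (m n : ℝ) * (a * Real.log n / n) / Real.log n
        - (k n : ℝ) * (a * Real.log n / n) / Real.log n + a * (1 / (n:ℝ)))
        atTop (𝓝 (ρ * a - 0 + a * 0)) := (hMp.sub hKp0).add (hninv.const_mul a)
    rw [sub_zero, mul_zero, add_zero] at h1
    apply Tendsto.congr' _ h1
    filter_upwards [hLpos, hn1] with n h2 h3
    have hn0 : (n:ℝ) ≠ 0 := by linarith
    have hcast : ((m n - k n + 1 : ℕ) : ℝ) = (m n : ℝ) - (k n : ℝ) + 1 := by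
      have := (hkm n).2
      push_cast [Nat.cast_sub this]
      ring
    rw [hcast]
    field_simp
  -- log K / L → 0  and  log (K+1) / L → 0
  have hlogbound : Tendsto (fun n : ℕ => Real.log ((τ*ρ+2) * Real.log n) / Real.log n)
      atTop (𝓝 0) := by
    have h2 : Tendsto (fun n : ℕ => Real.log (Real.log n) / Real.log n) atTop (𝓝 0) :=
      (Real.isLittleO_log_id_atTop.tendsto_div_nhds_zero).comp hLtop
    have h3 : Tendsto (fun n : ℕ => Real.log (τ*ρ+2) / Real.log n + Real.log (Real.log n) / Real.log n)
        atTop (𝓝 (0 + 0)) := (tendsto_const_nhds.div_atTop hLtop).add h2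
    rw [add_zero] at h3
    apply Tendsto.congr' _ h3
    filter_upwards [hLpos] with n h4
    rw [Real.log_mul (by positivity) h4.ne', add_div]
  have hKbound : ∀ᶠ n : ℕ in atTop, (k n : ℝ) ≤ (τ*ρ+1) * Real.log n := by
    have h1 : ∀ᶠ n : ℕ in atTop, (k n : ℝ) / Real.log n < τ*ρ+1 :=
      hk.eventually (eventually_lt_nhds (by linarith))
    filter_upwards [h1, hLpos] with n h2 h3
    rw [div_lt_iff₀ h3] at h2
    linarith
  have hlogK : Tendsto (fun n : ℕ => Real.log (k n) / Real.log n) atTop (𝓝 0) := by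
    apply tendsto_of_tendsto_of_tendsto_of_le_of_le' tendsto_const_nhds hlogbound
    · filter_upwards [hLpos] with n h1
      have h3 : (1:ℝ) ≤ (k n : ℝ) := by exact_mod_cast (hkm n).1
      exact div_nonneg (Real.log_nonneg h3) h1.le
    · filter_upwards [hKbound, hLpos] with n h1 h2
      have hk1 : (1:ℝ) ≤ (k n : ℝ) := by exact_mod_cast (hkm n).1
      have hle : (k n : ℝ) ≤ (τ*ρ+2) * Real.log n := by nlinarith
      have := Real.log_le_log (by linarith) hle
      gcongr
  have hlogK1 : Tendsto (fun n : ℕ => Real.log ((k n : ℝ) + 1) / Real.log n) atTop (𝓝 0) := by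
    apply tendsto_of_tendsto_of_tendsto_of_le_of_le' tendsto_const_nhds hlogbound
    · filter_upwards [hLpos] with n h1
      have h3 : (1:ℝ) ≤ (k n : ℝ) + 1 := by linarith [Nat.cast_nonneg (α:=ℝ) (k n)]
      have h4 := Real.log_nonneg h3
      exact div_nonneg h4 h1.le
    · filter_upwards [hKbound, hLpos, hLtop.eventually_ge_atTop 1] with n h1 h2 h5
      have hk1 : (1:ℝ) ≤ (k n : ℝ) := by exact_mod_cast (hkm n).1
      have hle : (k n : ℝ) + 1 ≤ (τ*ρ+2) * Real.log n := by nlinarith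
      have := Real.log_le_log (by linarith) hle
      gcongr
  have htlogt : Tendsto (fun n : ℕ => ((k n:ℝ)/Real.log n) * Real.log ((k n:ℝ)/Real.log n))
      atTop (𝓝 ((τ*ρ) * Real.log (τ*ρ))) := (Real.continuous_mul_log.tendsto _).comp hk
  have hinvp : Tendsto (fun n : ℕ => 1/(1 - a * Real.log n / n)) atTop (𝓝 1) := by
    have h1 : Tendsto (fun n : ℕ => 1 - a * Real.log n / n) atTop (𝓝 1) := by
      have := (tendsto_const_nhds (x := (1:ℝ)) (f := atTop (α := ℕ))).sub hp0
      simpa using this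
    have h2 := (tendsto_const_nhds (x := (1:ℝ)) (f := atTop (α := ℕ))).div h1 one_ne_zero
    rw [div_one] at h2
    exact h2.congr fun n => by rw [Pi.div_apply]
  -- positivity of the cdf
  have hApos : ∀ᶠ n : ℕ in atTop, 0 < binomCdf (a * Real.log n / n) (m n) (k n) := by
    filter_upwards [hppos, hphalf] with n h1 h2
    set p := a * Real.log n / n with hpdef
    have h1p : 0 < 1 - p := by linarith
    have hchoosepos : 0 < ((m n).choose (k n) : ℝ) :=
      by exact_mod_cast Nat.choose_pos (hkm n).2
    calc (0:ℝ) < ((m n).choose (k n):ℝ) * p^(k n) * (1-p)^(m n - k n) := by positivity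
      _ ≤ binomCdf p (m n) (k n) := by
          unfold binomCdf
          exact Finset.single_le_sum
            (f := fun j => ((m n).choose j:ℝ) * p^j * (1-p)^(m n - j))
            (fun i _ => by positivity) (Finset.self_mem_range_succ (k n))
  -- Claim A : lower bound for log of the cdf
  have hA : ∀ᶠ n : ℕ in atTop,
      (k n:ℝ) * (Real.log (((m n - k n + 1 : ℕ):ℝ) * (a*Real.log n/n)) + 1 - Real.log (k n))
        - (1 + Real.log (k n)) - (m n:ℝ) * (a*Real.log n/n) / (1 - a*Real.log n/n)
      ≤ Real.log (binomCdf (a * Real.log n / n) (m n) (k n)) := by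
    filter_upwards [hppos, hphalf, hLpos, hn1] with n hp1 hp2 hL hn
    set p := a * Real.log n / n with hpdef
    obtain ⟨hk1, hkm'⟩ := hkm n
    have h1p : 0 < 1 - p := by linarith
    have hK1 : (1:ℝ) ≤ (k n:ℝ) := by exact_mod_cast hk1
    have hchoosepos : 0 < ((m n).choose (k n) : ℝ) := by exact_mod_cast Nat.choose_pos hkm'
    have hTP : ((m n).choose (k n):ℝ) * p^(k n) * (1-p)^(m n - k n)
        ≤ binomCdf p (m n) (k n) := by
      unfold binomCdf
      exact Finset.single_le_sum
        (f := fun j => ((m n).choose j:ℝ) * p^j * (1-p)^(m n - j))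
        (fun i _ => by positivity) (Finset.self_mem_range_succ (k n))
    have hlog1 : Real.log (((m n).choose (k n):ℝ) * p^(k n) * (1-p)^(m n - k n))
        ≤ Real.log (binomCdf p (m n) (k n)) := Real.log_le_log (by positivity) hTP
    rw [Real.log_mul (by positivity) (by positivity),
      Real.log_mul hchoosepos.ne' (by positivity), Real.log_pow, Real.log_pow] at hlog1
    have hD1 : (1:ℝ) ≤ ((m n - k n + 1 : ℕ):ℝ) := by exact_mod_cast Nat.le_add_left 1 (m n - k n)
    have hclow : Real.log (((m n - k n + 1 : ℕ):ℝ)^(k n) / ((k n).factorial : ℝ))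
        ≤ Real.log (((m n).choose (k n):ℝ)) :=
      Real.log_le_log (by positivity) (choose_lower hkm')
    rw [Real.log_div (by positivity) (by positivity), Real.log_pow] at hclow
    have hfact : Real.log ((k n).factorial : ℝ)
        ≤ 1 + Real.log (k n) + (k n) * (Real.log (k n) - 1) := by
      have h := factorial_le_real (k n) hk1
      have h2 := Real.log_le_log (by positivity) h
      rwa [Real.log_mul (by positivity) (by positivity),
        Real.log_mul (Real.exp_pos 1).ne' (by positivity), Real.log_exp, Real.log_pow,
        Real.log_div (by positivity) (Real.exp_pos 1).ne', Real.log_exp] at h2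
    have hlog1p_ge : -(p/(1-p)) ≤ Real.log (1-p) := by
      have h2 := Real.log_le_sub_one_of_pos (show 0 < (1-p)⁻¹ by positivity)
      rw [Real.log_inv] at h2
      have h3 : (1-p)⁻¹ - 1 = p/(1-p) := by field_simp; ring
      linarith [h3 ▸ h2]
    have hlogneg : Real.log (1-p) ≤ 0 := Real.log_nonpos (by linarith) (by linarith)
    have hMK : ((m n - k n:ℕ):ℝ) ≤ (m n:ℝ) := by exact_mod_cast Nat.sub_le _ _
    have h3 : -((m n:ℝ) * p/(1-p)) ≤ ((m n - k n:ℕ):ℝ) * Real.log (1-p) := by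
      have s1 : (m n:ℝ) * Real.log (1-p) ≤ ((m n - k n:ℕ):ℝ) * Real.log (1-p) :=
        mul_le_mul_of_nonpos_right hMK hlogneg
      have s2 : (m n:ℝ) * (-(p/(1-p))) ≤ (m n:ℝ) * Real.log (1-p) :=
        mul_le_mul_of_nonneg_left hlog1p_ge (by positivity)
      have e1 : (m n:ℝ) * (-(p/(1-p))) = -((m n:ℝ) * p/(1-p)) := by ring
      linarith [e1 ▸ s2]
    have hDp : Real.log (((m n - k n + 1 : ℕ):ℝ)*p)
        = Real.log ((m n - k n + 1 : ℕ):ℝ) + Real.log p :=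
      Real.log_mul (by positivity) (by positivity)
    rw [hDp]
    linarith
  -- Claim B : upper bound for log of the cdf
  have hB : ∀ᶠ n : ℕ in atTop,
      Real.log (binomCdf (a * Real.log n / n) (m n) (k n))
      ≤ (k n:ℝ) + Real.log ((k n:ℝ)+1)
        + max 0 ((k n:ℝ) * Real.log ((m n:ℝ)*(a*Real.log n/n)/(k n:ℝ)))
        - ((m n:ℝ) - (k n:ℝ)) * (a*Real.log n/n) := by
    filter_upwards [hppos, hphalf, hLpos, hn1, hApos] with n hp1 hp2 hL hn hPpos
    set p := a * Real.log n / n with hpdef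
    obtain ⟨hk1, hkm'⟩ := hkm n
    have h1p : 0 < 1 - p := by linarith
    have hK1 : (1:ℝ) ≤ (k n:ℝ) := by exact_mod_cast hk1
    have hMppos : 0 < (m n:ℝ) * p := by
      have : (1:ℝ) ≤ (m n:ℝ) := by exact_mod_cast hk1.trans hkm'
      positivity
    set x := (m n:ℝ)*p/(k n:ℝ) with hx
    have hxpos : 0 < x := by positivity
    set r := max 1 x with hr
    have hr1 : (1:ℝ) ≤ r := le_max_left _ _
    have bound : ∀ j ∈ Finset.range (k n + 1),
        ((m n).choose j:ℝ) * p^j * (1-p)^(m n - j)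
        ≤ Real.exp 1 ^ (k n) * r ^ (k n) * (1-p)^(m n - k n) := by
      intro j hj
      have hjk : j ≤ k n := Nat.lt_succ_iff.mp (Finset.mem_range.mp hj)
      have c1 : ((m n).choose j:ℝ) ≤ (m n:ℝ)^j / (j.factorial : ℝ) :=
        Nat.choose_le_pow_div j (m n)
      have c2 : (1-p)^(m n - j) ≤ (1-p)^(m n - k n) :=
        pow_le_pow_of_le_one h1p.le (by linarith) (Nat.sub_le_sub_left hjk _)
      have step1 : ((m n).choose j:ℝ) * p^j * (1-p)^(m n - j)
          ≤ ((m n:ℝ)*p)^j / (j.factorial : ℝ) * (1-p)^(m n - k n) := by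
        have e1 : ((m n:ℝ)*p)^j / (j.factorial : ℝ) = (m n:ℝ)^j / (j.factorial : ℝ) * p^j := by
          rw [mul_pow]; ring
        rw [e1]
        apply mul_le_mul _ c2 (by positivity) (by positivity)
        exact mul_le_mul_of_nonneg_right c1 (by positivity)
      have step2 : ((m n:ℝ)*p)^j / (j.factorial : ℝ) ≤ Real.exp 1 ^ (k n) * r ^ (k n) := by
        have e2 : ((m n:ℝ)*p)^j / (j.factorial : ℝ)
            = x^j * ((k n:ℝ)^j / (j.factorial : ℝ)) := by
          rw [hx, div_pow]
          field_simp
        have f1 : ((k n:ℝ))^j / (j.factorial : ℝ) ≤ ((k n:ℝ))^(k n) / ((k n).factorial : ℝ) := by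
          rw [div_le_div_iff₀ (by positivity) (by positivity)]
          have := factorial_le_factorial_mul_pow hjk
          have hcast : ((k n).factorial : ℝ) ≤ (j.factorial : ℝ) * (k n:ℝ)^(k n - j) := by
            exact_mod_cast this
          have epow : (k n:ℝ)^j * (k n:ℝ)^(k n - j) = (k n:ℝ)^(k n) := by
            rw [← pow_add]
            congr 1
            omega
          calc (k n:ℝ)^j * ((k n).factorial : ℝ)
              ≤ (k n:ℝ)^j * ((j.factorial : ℝ) * (k n:ℝ)^(k n - j)) :=
                mul_le_mul_of_nonneg_left hcast (by positivity)
            _ = (k n:ℝ)^j * (k n:ℝ)^(k n - j) * (j.factorial : ℝ) := by ring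
            _ = (k n:ℝ)^(k n) * (j.factorial : ℝ) := by rw [epow]

        have f2 : ((k n:ℝ))^(k n) / ((k n).factorial : ℝ) ≤ Real.exp 1 ^ (k n) := by
          have h := le_factorial_real (k n)
          rw [div_pow] at h
          rw [div_le_iff₀ (by positivity)]
          rw [div_le_iff₀ (by positivity)] at h
          calc ((k n:ℝ))^(k n) ≤ ((k n).factorial : ℝ) * Real.exp 1 ^ (k n) := h
            _ = Real.exp 1 ^ (k n) * ((k n).factorial : ℝ) := by ring
        have f3 : x^j ≤ r^(k n) := by
          calc x^j ≤ r^j := pow_le_pow_left₀ hxpos.le (le_max_right 1 x) j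
            _ ≤ r^(k n) := pow_le_pow_right₀ hr1 hjk
        calc ((m n:ℝ)*p)^j / (j.factorial : ℝ)
            = x^j * (((k n:ℝ))^j / (j.factorial : ℝ)) := e2
          _ ≤ r^(k n) * (((k n:ℝ))^(k n) / ((k n).factorial : ℝ)) := by
              apply mul_le_mul f3 f1 (by positivity) (by positivity)
          _ ≤ r^(k n) * Real.exp 1 ^ (k n) := mul_le_mul_of_nonneg_left f2 (by positivity)
          _ = Real.exp 1 ^ (k n) * r^(k n) := by ring
      calc ((m n).choose j:ℝ) * p^j * (1-p)^(m n - j)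
          ≤ ((m n:ℝ)*p)^j / (j.factorial : ℝ) * (1-p)^(m n - k n) := step1
        _ ≤ Real.exp 1 ^ (k n) * r ^ (k n) * (1-p)^(m n - k n) :=
            mul_le_mul_of_nonneg_right step2 (by positivity)
    have hsum : binomCdf p (m n) (k n)
        ≤ ((k n:ℝ)+1) * (Real.exp 1 ^ (k n) * r ^ (k n) * (1-p)^(m n - k n)) := by
      unfold binomCdf
      have := Finset.sum_le_card_nsmul (Finset.range (k n + 1)) _ _ bound
      rwa [Finset.card_range, nsmul_eq_mul, Nat.cast_add, Nat.cast_one] at this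
    have hlog := Real.log_le_log hPpos hsum
    rw [Real.log_mul (by positivity) (by positivity),
      Real.log_mul (by positivity) (by positivity),
      Real.log_mul (by positivity) (by positivity),
      Real.log_pow, Real.log_pow, Real.log_pow, Real.log_exp] at hlog
    -- identify K * log r with the max-term
    have hlogr : (k n:ℝ) * Real.log r = max 0 ((k n:ℝ) * Real.log x) := by
      rcases le_total x 1 with h | h
      · rw [hr, max_eq_left h, Real.log_one, mul_zero, max_eq_left]
        exact mul_nonpos_of_nonneg_of_nonpos (by positivity) (Real.log_nonpos hxpos.le h)
      · rw [hr, max_eq_right h, max_eq_right]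
        exact mul_nonneg (by positivity) (Real.log_nonneg h)
    -- (M-K) log(1-p) ≤ -(M-K) p
    have hlog1p_le : Real.log (1-p) ≤ -p := by
      have := Real.log_le_sub_one_of_pos h1p; linarith
    rw [hlogr, Nat.cast_sub hkm'] at hlog
    have hge : (0:ℝ) ≤ (m n:ℝ) - (k n:ℝ) := by
      rw [sub_nonneg]
      exact_mod_cast hkm'
    have h4 : ((m n:ℝ) - (k n:ℝ)) * Real.log (1-p) ≤ -(((m n:ℝ) - (k n:ℝ)) * p) := by
      nlinarith [mul_le_mul_of_nonneg_left hlog1p_le hge]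
    linarith
  -- Claim C : limit of lower bound / log n
  have hC : Tendsto (fun n : ℕ =>
      ((k n:ℝ) * (Real.log (((m n - k n + 1 : ℕ):ℝ) * (a*Real.log n/n)) + 1 - Real.log (k n))
        - (1 + Real.log (k n)) - (m n:ℝ) * (a*Real.log n/n) / (1 - a*Real.log n/n)) / Real.log n)
      atTop (𝓝 (τ*ρ*Real.log (ρ*a) + τ*ρ - τ*ρ*Real.log (τ*ρ) - 0 - (ρ*a)*1)) := by
    have hzero : Tendsto (fun n : ℕ => (1 + Real.log (k n))/Real.log n) atTop (𝓝 0) := by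
      have h1 := hLinv.add hlogK
      rw [add_zero] at h1
      apply Tendsto.congr _ h1
      intro n
      rw [← add_div]
    have hG : Tendsto (fun n : ℕ =>
        ((k n:ℝ)/Real.log n) * Real.log (((m n - k n + 1 : ℕ):ℝ) * (a*Real.log n/n) / Real.log n)
        + (k n:ℝ)/Real.log n
        - ((k n:ℝ)/Real.log n) * Real.log ((k n:ℝ)/Real.log n)
        - (1 + Real.log (k n))/Real.log n
        - ((m n:ℝ) * (a*Real.log n/n)/Real.log n) * (1/(1 - a*Real.log n/n)))
        atTop (𝓝 (τ*ρ*Real.log (ρ*a) + τ*ρ - τ*ρ*Real.log (τ*ρ) - 0 - (ρ*a)*1)) :=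
      ((((hk.mul (hd.log (by positivity))).add hk).sub htlogt).sub hzero).sub (hMp.mul hinvp)
    apply Tendsto.congr' _ hG
    filter_upwards [hLpos, hppos, hphalf, hn1] with n hL hp hp2 hn
    have hn0 : (n:ℝ) ≠ 0 := by linarith
    have hK1 : (1:ℝ) ≤ (k n:ℝ) := by exact_mod_cast (hkm n).1
    have hD1 : (1:ℝ) ≤ ((m n - k n + 1:ℕ):ℝ) := by
      exact_mod_cast Nat.le_add_left 1 (m n - k n)
    have h1p : (1 - a*Real.log n/n) ≠ 0 := by
      have : (0:ℝ) < 1 - a*Real.log n/n := by linarith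
      linarith
    have e1 : Real.log (((m n - k n + 1:ℕ):ℝ) * (a*Real.log n/n) / Real.log n)
        = Real.log (((m n - k n + 1:ℕ):ℝ) * (a*Real.log n/n)) - Real.log (Real.log n) :=
      Real.log_div (by positivity) hL.ne'
    have e2 : Real.log ((k n:ℝ)/Real.log n) = Real.log (k n:ℝ) - Real.log (Real.log n) :=
      Real.log_div (by positivity) hL.ne'
    rw [e1, e2]
    ring
  -- Claim D : limit of upper bound / log n
  have hD' : Tendsto (fun n : ℕ =>
      ((k n:ℝ) + Real.log ((k n:ℝ)+1)
        + max 0 ((k n:ℝ) * Real.log ((m n:ℝ)*(a*Real.log n/n)/(k n:ℝ)))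
        - ((m n:ℝ) - (k n:ℝ)) * (a*Real.log n/n)) / Real.log n)
      atTop (𝓝 (τ*ρ + 0 + max 0 (τ*ρ*Real.log (ρ*a) - τ*ρ*Real.log (τ*ρ)) - (ρ*a - 0))) := by
    have hH : Tendsto (fun n : ℕ =>
        (k n:ℝ)/Real.log n + Real.log ((k n:ℝ)+1)/Real.log n
        + max 0 (((k n:ℝ)/Real.log n) * Real.log ((m n:ℝ)*(a*Real.log n/n)/Real.log n)
                 - ((k n:ℝ)/Real.log n) * Real.log ((k n:ℝ)/Real.log n))
        - ((m n:ℝ)*(a*Real.log n/n)/Real.log n - (k n:ℝ)*(a*Real.log n/n)/Real.log n))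
        atTop (𝓝 (τ*ρ + 0 + max 0 (τ*ρ*Real.log (ρ*a) - τ*ρ*Real.log (τ*ρ)) - (ρ*a - 0))) :=
      (((hk.add hlogK1).add (tendsto_const_nhds.max
        ((hk.mul (hMp.log (by positivity))).sub htlogt))).sub (hMp.sub hKp0))
    apply Tendsto.congr' _ hH
    filter_upwards [hLpos, hppos, hn1] with n hL hp hn
    have hn0 : (n:ℝ) ≠ 0 := by linarith
    have hK1 : (1:ℝ) ≤ (k n:ℝ) := by exact_mod_cast (hkm n).1
    have hM1 : (1:ℝ) ≤ (m n:ℝ) := by exact_mod_cast (hkm n).1.trans (hkm n).2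
    have e1 : Real.log ((m n:ℝ)*(a*Real.log n/n)/Real.log n)
        = Real.log ((m n:ℝ)*(a*Real.log n/n)) - Real.log (Real.log n) :=
      Real.log_div (by positivity) hL.ne'
    have e2 : Real.log ((k n:ℝ)/Real.log n) = Real.log (k n:ℝ) - Real.log (Real.log n) :=
      Real.log_div (by positivity) hL.ne'
    have e3 : ((k n:ℝ)/Real.log n) * Real.log ((m n:ℝ)*(a*Real.log n/n)/Real.log n)
        - ((k n:ℝ)/Real.log n) * Real.log ((k n:ℝ)/Real.log n)
        = ((k n:ℝ) * Real.log ((m n:ℝ)*(a*Real.log n/n)/(k n:ℝ))) / Real.log n := by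
      rw [e1, e2, Real.log_div (by positivity) (by positivity)]
      ring
    rw [e3]
    have e4 : max 0 (((k n:ℝ) * Real.log ((m n:ℝ)*(a*Real.log n/n)/(k n:ℝ))) / Real.log n)
        = (max 0 ((k n:ℝ) * Real.log ((m n:ℝ)*(a*Real.log n/n)/(k n:ℝ)))) / Real.log n := by
      rw [← max_div_div_right hL.le, zero_div]
    rw [e4]
    ring
  -- identify the two limits with the target
  rw [show (τ*ρ*Real.log (ρ*a) + τ*ρ - τ*ρ*Real.log (τ*ρ) - 0 - (ρ*a)*1)
      = -(ρ * (a - τ * Real.log (Real.exp 1 * a / τ))) from by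
    rw [← arith_limit a ρ τ ha hρ hτ0 hτa]; ring] at hC
  rw [show (τ*ρ + 0 + max 0 (τ*ρ*Real.log (ρ*a) - τ*ρ*Real.log (τ*ρ)) - (ρ*a - 0))
      = -(ρ * (a - τ * Real.log (Real.exp 1 * a / τ))) from by
    rw [← arith_limit_max a ρ τ ha hρ hτ0 hτa]; ring] at hD'
  -- squeeze
  apply tendsto_of_tendsto_of_tendsto_of_le_of_le' hC hD'
  · filter_upwards [hA, hLpos] with n h1 h2
    exact div_le_div_of_nonneg_right' h1 h2
  · filter_upwards [hB, hLpos] with n h1 h2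
    exact div_le_div_of_nonneg_right' h1 h2

lemma cdf_pos_eventually (ha : 0 < a)
    (hkm : ∀ n, 1 ≤ k n ∧ k n ≤ m n) :
    ∀ᶠ n : ℕ in atTop, 0 < binomCdf (a * Real.log n / n) (m n) (k n) := by
  have hLtop : Tendsto (fun n : ℕ => Real.log n) atTop atTop :=
    Real.tendsto_log_atTop.comp tendsto_natCast_atTop_atTop
  have hLpos : ∀ᶠ n : ℕ in atTop, 0 < Real.log n := hLtop.eventually_gt_atTop 0
  have hn1 : ∀ᶠ n : ℕ in atTop, (1:ℝ) < (n:ℝ) := by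
    filter_upwards [eventually_ge_atTop 2] with n hn
    exact_mod_cast Nat.lt_of_lt_of_le one_lt_two hn
  have hp0 : Tendsto (fun n : ℕ => a * Real.log n / n) atTop (𝓝 0) := by
    have h1 : Tendsto (fun x : ℝ => Real.log x / x) atTop (𝓝 0) :=
      Real.isLittleO_log_id_atTop.tendsto_div_nhds_zero
    have h2 : Tendsto (fun n : ℕ => Real.log n / n) atTop (𝓝 0) :=
      h1.comp tendsto_natCast_atTop_atTop
    have := h2.const_mul a
    simpa [mul_div_assoc] using this
  have hphalf : ∀ᶠ n : ℕ in atTop, a * Real.log n / n < 1/2 :=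
    hp0.eventually (eventually_lt_nhds (show (0:ℝ) < 1/2 by norm_num))
  filter_upwards [hphalf, hLpos, hn1] with n h2 hL hn
  set p := a * Real.log n / n with hpdef
  have h1 : 0 < p := by
    have : (0:ℝ) < n := by linarith
    positivity
  have h1p : 0 < 1 - p := by linarith
  have hchoosepos : 0 < ((m n).choose (k n) : ℝ) :=
    by exact_mod_cast Nat.choose_pos (hkm n).2
  calc (0:ℝ) < ((m n).choose (k n):ℝ) * p^(k n) * (1-p)^(m n - k n) := by positivity
    _ ≤ binomCdf p (m n) (k n) := by
        unfold binomCdf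
        exact Finset.single_le_sum
          (f := fun j => ((m n).choose j:ℝ) * p^j * (1-p)^(m n - j))
          (fun i _ => by positivity) (Finset.self_mem_range_succ (k n))

end

/-- Let `X ~ Binom(m, a·log n/n)` with `m = ρn + o(n)`, `ρ > 0`, `a > 0`, and let
`kₙ = τρ·log n + o(log n)` with `0 ≤ τ ≤ a`, `kₙ ∈ [m]`. Then
`P(X ≤ kₙ) = n^{-ρ(a - τ·log(ea/τ)) + o(1)}`. -/
theorem binomial_lower_tail_asymptotics (a ρ τ : ℝ) (ha : 0 < a) (hρ : 0 < ρ)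
    (hτ0 : 0 ≤ τ) (hτa : τ ≤ a)
    (m k : ℕ → ℕ)
    (hm : Filter.Tendsto (fun n => (m n : ℝ) / n) Filter.atTop (𝓝 ρ))
    (hk : Filter.Tendsto (fun n => (k n : ℝ) / Real.log n) Filter.atTop (𝓝 (τ * ρ)))
    (hkm : ∀ n, 1 ≤ k n ∧ k n ≤ m n) :
    ∃ e : ℕ → ℝ, Filter.Tendsto e Filter.atTop (𝓝 0) ∧
      ∀ᶠ n : ℕ in Filter.atTop,
        binomCdf (a * Real.log n / n) (m n) (k n)
          = (n : ℝ) ^ (-(ρ * (a - τ * Real.log (Real.exp 1 * a / τ))) + e n) := by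
  refine ⟨fun n => Real.log (binomCdf (a * Real.log n / n) (m n) (k n)) / Real.log n
      + ρ * (a - τ * Real.log (Real.exp 1 * a / τ)), ?_, ?_⟩
  · have h := (key_tendsto a ρ τ m k ha hρ hτ0 hτa hm hk hkm).add
      (tendsto_const_nhds (x := ρ * (a - τ * Real.log (Real.exp 1 * a / τ))))
    simpa using h
  · have hLtop : Tendsto (fun n : ℕ => Real.log n) atTop atTop :=
      Real.tendsto_log_atTop.comp tendsto_natCast_atTop_atTop
    filter_upwards [cdf_pos_eventually a m k ha hkm, hLtop.eventually_gt_atTop 0,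
      eventually_ge_atTop 1] with n h1 h2 h3
    have hn0 : (0:ℝ) < n := by exact_mod_cast h3
    rw [show -(ρ*(a - τ*Real.log (Real.exp 1*a/τ)))
        + (Real.log (binomCdf (a * Real.log n / n) (m n) (k n))/Real.log n
          + ρ*(a - τ*Real.log (Real.exp 1*a/τ)))
        = Real.log (binomCdf (a * Real.log n / n) (m n) (k n))/Real.log n from by ring]
    rw [Real.rpow_def_of_pos hn0]
    rw [show Real.log n * (Real.log (binomCdf (a * Real.log n / n) (m n) (k n))/Real.log n)
        = Real.log (binomCdf (a * Real.log n / n) (m n) (k n)) from by field_simp]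
    exact (Real.exp_log h1).symm
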